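/- arXiv:1108.2816 — 3 statements merged into one kernel-verified Lean document; each statement's English description precedes it below -/
import Mathlib

section
/- Directed information is bounded by mutual information: for jointly distributed random vectors X^n = (X_1,...,X_n) and Y^n = (Y_1,...,Y_n), I(X^n → Y^n) := Σ_{i=1}^n I(X^i; Y_i | Y^{i-1}) satisfies I(X^n → Y^n) ≤ I(X^n; Y^n). -/
/-- Probability that a finite-valued random variable `X` on a finite probability space with
weights `p` takes the value `a`. -/
noncomputable def prob {Ω α : Type*} [Fintype Ω] [DecidableEq α]
    (p : Ω → ℝ) (X : Ω → α) (a : α) : ℝ :=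
  ∑ ω ∈ Finset.univ.filter (fun ω => X ω = a), p ω

/-- Shannon entropy `H(X)` (base e). -/
noncomputable def entH {Ω α : Type*} [Fintype Ω] [Fintype α] [DecidableEq α]
    (p : Ω → ℝ) (X : Ω → α) : ℝ :=
  ∑ a, Real.negMulLog (prob p X a)

/-- Conditional entropy `H(X | Y) = H(X, Y) − H(Y)`. -/
noncomputable def condEnt {Ω α β : Type*} [Fintype Ω] [Fintype α] [Fintype β]
    [DecidableEq α] [DecidableEq β] (p : Ω → ℝ) (X : Ω → α) (Y : Ω → β) : ℝ :=
  entH p (fun ω => (X ω, Y ω)) - entH p Y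

/-- Mutual information `I(X; Y) = H(X) + H(Y) − H(X, Y)`. -/
noncomputable def mutInfo {Ω α β : Type*} [Fintype Ω] [Fintype α] [Fintype β]
    [DecidableEq α] [DecidableEq β] (p : Ω → ℝ) (X : Ω → α) (Y : Ω → β) : ℝ :=
  entH p X + entH p Y - entH p (fun ω => (X ω, Y ω))

/-- Conditional mutual information `I(X; Y | V) = H(X|V) + H(Y|V) − H(X,Y|V)`. -/
noncomputable def condMutInfo {Ω α β γ : Type*} [Fintype Ω] [Fintype α] [Fintype β] [Fintype γ]
    [DecidableEq α] [DecidableEq β] [DecidableEq γ]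
    (p : Ω → ℝ) (X : Ω → α) (Y : Ω → β) (V : Ω → γ) : ℝ :=
  condEnt p X V + condEnt p Y V - condEnt p (fun ω => (X ω, Y ω)) V

open Real Finset

section Helpers
variable {Ω α β γ : Type*} [Fintype Ω]

lemma prob_nonneg [DecidableEq α] (p : Ω → ℝ) (hp : ∀ ω, 0 ≤ p ω) (X : Ω → α) (a : α) :
    0 ≤ prob p X a := Finset.sum_nonneg fun ω _ => hp ω

lemma prob_comp_inj [DecidableEq α] [DecidableEq β] (p : Ω → ℝ) (X : Ω → α)
    (f : α → β) (hf : Function.Injective f) (a : α) :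
    prob p (fun ω => f (X ω)) (f a) = prob p X a := by
  unfold prob; congr 1; ext ω; simp [hf.eq_iff]

lemma entH_comp_inj [Fintype α] [Fintype β] [DecidableEq α] [DecidableEq β]
    (p : Ω → ℝ) (X : Ω → α) (f : α → β) (hf : Function.Injective f) :
    entH p (fun ω => f (X ω)) = entH p X := by
  unfold entH
  rw [← Finset.sum_subset (Finset.subset_univ (Finset.univ.image f))]
  · rw [Finset.sum_image (fun a _ b _ h => hf h)]
    exact Finset.sum_congr rfl fun a _ => by rw [prob_comp_inj p X f hf]
  · intro b _ hb
    have : prob p (fun ω => f (X ω)) b = 0 := by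
      unfold prob
      rw [Finset.sum_eq_zero]
      intro ω hω
      simp only [Finset.mem_filter] at hω
      exact absurd (hω.2 ▸ Finset.mem_image_of_mem f (Finset.mem_univ _)) hb
    rw [this, Real.negMulLog_zero]

lemma entH_congr_inj [Fintype α] [Fintype β] [DecidableEq α] [DecidableEq β]
    (p : Ω → ℝ) (W1 : Ω → α) (W2 : Ω → β) (f : α → β) (hf : Function.Injective f)
    (h : ∀ ω, f (W1 ω) = W2 ω) : entH p W2 = entH p W1 := by
  rw [← entH_comp_inj p W1 f hf]
  congr 1; funext ω; exact (h ω).symm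

lemma prob_marg [DecidableEq α] [DecidableEq β] [Fintype β]
    (p : Ω → ℝ) (X : Ω → α) (Y : Ω → β) (a : α) :
    prob p X a = ∑ b, prob p (fun ω => (X ω, Y ω)) (a, b) := by
  unfold prob
  simp_rw [Finset.sum_filter]
  rw [Finset.sum_comm]
  refine Finset.sum_congr rfl fun ω _ => ?_
  by_cases h : X ω = a
  · simp [h, Prod.ext_iff]
  · simp [h, Prod.ext_iff]

end Helpers

private lemma swap3 {A B C : Type*} [Fintype A] [Fintype B] [Fintype C]
    (f : A → B → C → ℝ) : ∑ a, ∑ b, ∑ c, f a b c = ∑ c, ∑ a, ∑ b, f a b c := by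
  calc ∑ a, ∑ b, ∑ c, f a b c = ∑ a, ∑ c, ∑ b, f a b c :=
        Finset.sum_congr rfl fun a _ => Finset.sum_comm
    _ = ∑ c, ∑ a, ∑ b, f a b c := Finset.sum_comm

lemma core_submod {A B C : Type*} [Fintype A] [Fintype B] [Fintype C]
    (q : A → B → C → ℝ) (hq : ∀ a b c, 0 ≤ q a b c) :
    ∑ c, negMulLog (∑ a, ∑ b, q a b c) + ∑ a, ∑ b, ∑ c, negMulLog (q a b c)
      ≤ (∑ a, ∑ c, negMulLog (∑ b, q a b c)) + ∑ b, ∑ c, negMulLog (∑ a, q a b c) := by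
  set qa : A → C → ℝ := fun a c => ∑ b, q a b c with hqa
  set qb : B → C → ℝ := fun b c => ∑ a, q a b c with hqb
  set qc : C → ℝ := fun c => ∑ a, ∑ b, q a b c with hqc
  have hqa0 : ∀ a c, 0 ≤ qa a c := fun a c => Finset.sum_nonneg fun _ _ => hq _ _ _
  have hqb0 : ∀ b c, 0 ≤ qb b c := fun b c => Finset.sum_nonneg fun _ _ => hq _ _ _
  have hqc0 : ∀ c, 0 ≤ qc c := fun c => Finset.sum_nonneg fun _ _ => hqa0 _ _
  have hle_qa : ∀ a b c, q a b c ≤ qa a c := fun a b c =>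
    Finset.single_le_sum (fun b _ => hq a b c) (mem_univ b)
  have hle_qb : ∀ a b c, q a b c ≤ qb b c := fun a b c =>
    Finset.single_le_sum (fun a _ => hq a b c) (mem_univ a)
  have hle_qc : ∀ a c, qa a c ≤ qc c := fun a c =>
    Finset.single_le_sum (fun a _ => hqa0 a c) (mem_univ a)
  have hterm : ∀ a b c,
      q a b c - qa a c * qb b c / qc c ≤
      q a b c * Real.log (q a b c) + q a b c * Real.log (qc c)
        - q a b c * Real.log (qa a c) - q a b c * Real.log (qb b c) := by
    intro a b c
    rcases eq_or_lt_of_le (hq a b c) with h0 | hpos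
    · rw [← h0]
      simp only [zero_mul, add_zero, sub_zero, zero_add, zero_sub, neg_nonpos]
      exact div_nonneg (mul_nonneg (hqa0 _ _) (hqb0 _ _)) (hqc0 _)
    · have hqapos : 0 < qa a c := lt_of_lt_of_le hpos (hle_qa a b c)
      have hqbpos : 0 < qb b c := lt_of_lt_of_le hpos (hle_qb a b c)
      have hqcpos : 0 < qc c := lt_of_lt_of_le hqapos (hle_qc a c)
      set t : ℝ := qa a c * qb b c / (q a b c * qc c) with ht
      have htpos : 0 < t := by positivity
      have hlogt : Real.log t =
          Real.log (qa a c) + Real.log (qb b c) - (Real.log (q a b c) + Real.log (qc c)) := by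
        rw [ht, Real.log_div (by positivity) (by positivity),
          Real.log_mul hqapos.ne' hqbpos.ne', Real.log_mul hpos.ne' hqcpos.ne']
      have hqt : q a b c * t = qa a c * qb b c / qc c := by
        rw [ht]; field_simp
      have hl := Real.log_le_sub_one_of_pos htpos
      nlinarith [mul_le_mul_of_nonneg_left hl (le_of_lt hpos)]
  have hsum0 : 0 ≤ ∑ a, ∑ b, ∑ c, (q a b c - qa a c * qb b c / qc c) := by
    rw [swap3]
    refine Finset.sum_nonneg fun c _ => ?_
    have h1 : ∑ a, ∑ b, (q a b c - qa a c * qb b c / qc c)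
        = qc c - (∑ a, qa a c) * (∑ b, qb b c) / qc c := by
      rw [hqc]
      simp only [Finset.sum_sub_distrib]
      congr 1
      symm
      rw [Finset.sum_mul, Finset.sum_div]
      refine Finset.sum_congr rfl fun a _ => ?_
      rw [Finset.mul_sum, Finset.sum_div]
    rw [h1]
    have h2 : ∑ a, qa a c = qc c := rfl
    have h3 : ∑ b, qb b c = qc c := Finset.sum_comm
    rw [h2, h3]
    rcases eq_or_lt_of_le (hqc0 c) with h | h
    · rw [← h]; simp
    · rw [mul_div_assoc, div_self h.ne', mul_one, sub_self]
  have hS : 0 ≤ ∑ a, ∑ b, ∑ c,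
      (q a b c * Real.log (q a b c) + q a b c * Real.log (qc c)
        - q a b c * Real.log (qa a c) - q a b c * Real.log (qb b c)) := by
    refine le_trans hsum0 ?_
    exact Finset.sum_le_sum fun a _ => Finset.sum_le_sum fun b _ =>
      Finset.sum_le_sum fun c _ => hterm a b c
  have E1 : ∑ c, qc c * Real.log (qc c) = ∑ a, ∑ b, ∑ c, q a b c * Real.log (qc c) := by
    rw [swap3]
    refine Finset.sum_congr rfl fun c _ => ?_
    rw [hqc]
    simp only [Finset.sum_mul]
  have E2 : ∑ a, ∑ c, qa a c * Real.log (qa a c)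
      = ∑ a, ∑ b, ∑ c, q a b c * Real.log (qa a c) := by
    refine Finset.sum_congr rfl fun a _ => ?_
    rw [Finset.sum_comm]
    refine Finset.sum_congr rfl fun c _ => ?_
    rw [hqa]
    simp only [Finset.sum_mul]
  have E3 : ∑ b, ∑ c, qb b c * Real.log (qb b c)
      = ∑ a, ∑ b, ∑ c, q a b c * Real.log (qb b c) := by
    rw [show (∑ a, ∑ b, ∑ c, q a b c * Real.log (qb b c) : ℝ)
        = ∑ b, ∑ a, ∑ c, q a b c * Real.log (qb b c) from Finset.sum_comm]
    refine Finset.sum_congr rfl fun b _ => ?_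
    rw [Finset.sum_comm]
    refine Finset.sum_congr rfl fun c _ => ?_
    rw [hqb]
    simp only [Finset.sum_mul]
  have E4 : ∑ a, ∑ b, ∑ c,
      (q a b c * Real.log (q a b c) + q a b c * Real.log (qc c)
        - q a b c * Real.log (qa a c) - q a b c * Real.log (qb b c))
      = (∑ a, ∑ b, ∑ c, q a b c * Real.log (q a b c))
        + (∑ a, ∑ b, ∑ c, q a b c * Real.log (qc c))
        - (∑ a, ∑ b, ∑ c, q a b c * Real.log (qa a c))
        - (∑ a, ∑ b, ∑ c, q a b c * Real.log (qb b c)) := by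
    simp [Finset.sum_add_distrib, Finset.sum_sub_distrib]
  simp only [negMulLog, neg_mul, Finset.sum_neg_distrib]
  rw [E4] at hS
  linarith [hS, E1, E2, E3]

section CMI
variable {Ω α β γ : Type*} [Fintype Ω] [Fintype α] [Fintype β] [Fintype γ]
  [DecidableEq α] [DecidableEq β] [DecidableEq γ]

lemma condMutInfo_nonneg (p : Ω → ℝ) (hp : ∀ ω, 0 ≤ p ω)
    (X : Ω → α) (Y : Ω → β) (V : Ω → γ) : 0 ≤ condMutInfo p X Y V := by
  classical
  set q : α → β → γ → ℝ := fun a b c => prob p (fun ω => (X ω, Y ω, V ω)) (a, b, c) with hq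
  have hq0 : ∀ a b c, 0 ≤ q a b c := fun a b c => prob_nonneg p hp _ _
  have hXV : ∀ a c, prob p (fun ω => (X ω, V ω)) (a, c) = ∑ b, q a b c := by
    intro a c
    rw [prob_marg p (fun ω => (X ω, V ω)) Y (a, c)]
    refine Finset.sum_congr rfl fun b _ => ?_
    rw [hq]
    have hinj : Function.Injective (fun z : (α × γ) × β => (z.1.1, z.2, z.1.2)) := by
      intro z w h
      simp only [Prod.mk.injEq] at h
      exact Prod.ext (Prod.ext h.1 h.2.2) h.2.1
    have := prob_comp_inj p (fun ω => ((X ω, V ω), Y ω)) _ hinj ((a, c), b)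
    simpa using this.symm
  have hYV : ∀ b c, prob p (fun ω => (Y ω, V ω)) (b, c) = ∑ a, q a b c := by
    intro b c
    rw [prob_marg p (fun ω => (Y ω, V ω)) X (b, c)]
    refine Finset.sum_congr rfl fun a _ => ?_
    rw [hq]
    have hinj : Function.Injective (fun z : (β × γ) × α => (z.2, z.1.1, z.1.2)) := by
      intro z w h
      simp only [Prod.mk.injEq] at h
      exact Prod.ext (Prod.ext h.2.1 h.2.2) h.1
    have := prob_comp_inj p (fun ω => ((Y ω, V ω), X ω)) _ hinj ((b, c), a)
    simpa using this.symm
  have hV : ∀ c, prob p V c = ∑ a, ∑ b, q a b c := by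
    intro c
    rw [prob_marg p V (fun ω => (X ω, Y ω)) c, Fintype.sum_prod_type]
    refine Finset.sum_congr rfl fun a _ => Finset.sum_congr rfl fun b _ => ?_
    rw [hq]
    have hinj : Function.Injective (fun z : γ × α × β => (z.2.1, z.2.2, z.1)) := by
      intro z w h
      simp only [Prod.mk.injEq] at h
      exact Prod.ext h.2.2 (Prod.ext h.1 h.2.1)
    have := prob_comp_inj p (fun ω => (V ω, X ω, Y ω)) _ hinj (c, a, b)
    simpa using this.symm
  have HXV : entH p (fun ω => (X ω, V ω)) = ∑ a, ∑ c, Real.negMulLog (∑ b, q a b c) := by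
    rw [entH, Fintype.sum_prod_type]
    exact Finset.sum_congr rfl fun a _ => Finset.sum_congr rfl fun c _ => by rw [hXV]
  have HYV : entH p (fun ω => (Y ω, V ω)) = ∑ b, ∑ c, Real.negMulLog (∑ a, q a b c) := by
    rw [entH, Fintype.sum_prod_type]
    exact Finset.sum_congr rfl fun b _ => Finset.sum_congr rfl fun c _ => by rw [hYV]
  have HV : entH p V = ∑ c, Real.negMulLog (∑ a, ∑ b, q a b c) := by
    rw [entH]
    exact Finset.sum_congr rfl fun c _ => by rw [hV]
  have HXYV : entH p (fun ω => ((X ω, Y ω), V ω))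
      = ∑ a, ∑ b, ∑ c, Real.negMulLog (q a b c) := by
    have hinj : Function.Injective (fun z : (α × β) × γ => (z.1.1, z.1.2, z.2)) := by
      intro z w h
      simp only [Prod.mk.injEq] at h
      exact Prod.ext (Prod.ext h.1 h.2.1) h.2.2
    have he : entH p (fun ω => (X ω, Y ω, V ω)) = entH p (fun ω => ((X ω, Y ω), V ω)) :=
      entH_congr_inj p (fun ω => ((X ω, Y ω), V ω)) _ _ hinj (fun ω => rfl)
    rw [← he, entH, Fintype.sum_prod_type]
    refine Finset.sum_congr rfl fun a _ => ?_
    rw [Fintype.sum_prod_type]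
  have key := core_submod q hq0
  unfold condMutInfo condEnt
  rw [HXV, HYV, HV, HXYV]
  linarith
end CMI

section Chain
variable {Ω 𝓧 𝓨 : Type*} [Fintype Ω] [Fintype 𝓧] [Fintype 𝓨] [DecidableEq 𝓧] [DecidableEq 𝓨]

lemma entH_unique {α : Type*} [Fintype α] [DecidableEq α] [Unique α]
    (p : Ω → ℝ) (hp1 : ∑ ω, p ω = 1) (W : Ω → α) : entH p W = 0 := by
  rw [entH, Fintype.sum_unique]
  have : prob p W default = 1 := by
    rw [prob, Finset.filter_true_of_mem (fun ω _ => Subsingleton.elim _ _)]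
    exact hp1
  rw [this, Real.negMulLog_one]

lemma snoc_inj (k : ℕ) {𝓨 : Type*} :
    Function.Injective (fun z : 𝓨 × (Fin k → 𝓨) => (Fin.snoc z.2 z.1 : Fin (k+1) → 𝓨)) := by
  have : Function.LeftInverse
      (fun h : Fin (k+1) → 𝓨 => (h (Fin.last k), fun i : Fin k => h i.castSucc))
      (fun z : 𝓨 × (Fin k → 𝓨) => (Fin.snoc z.2 z.1 : Fin (k+1) → 𝓨)) := by
    intro z
    simp [Fin.snoc_last, Fin.snoc_castSucc]
  exact this.injective

lemma chain_rule (p : Ω → ℝ) (hp : ∀ ω, 0 ≤ p ω) (hp1 : ∑ ω, p ω = 1)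
    (n : ℕ) (X : Fin n → Ω → 𝓧) (Y : Fin n → Ω → 𝓨) :
    ∀ k (hk : k ≤ n),
      mutInfo p (fun ω i => X i ω) (fun ω (j : Fin k) => Y (Fin.castLE hk j) ω)
      = ∑ i : Fin k, condMutInfo p (fun ω i' => X i' ω) (Y (Fin.castLE hk i))
          (fun ω (j : Fin i.1) => Y ⟨j.1, (j.isLt.trans i.isLt).trans_le hk⟩ ω) := by
  intro k
  induction k with
  | zero =>
    intro hk
    rw [Finset.univ_eq_empty, Finset.sum_empty]
    unfold mutInfo
    have h1 : entH p (fun ω (j : Fin 0) => Y (Fin.castLE hk j) ω) = 0 :=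
      entH_unique p hp1 _
    have h2 : entH p (fun ω => ((fun i' => X i' ω), fun j : Fin 0 => Y (Fin.castLE hk j) ω))
        = entH p (fun ω i' => X i' ω) := by
      refine entH_congr_inj p (fun ω i' => X i' ω) _
        (fun x : Fin n → 𝓧 => (x, (default : Fin 0 → 𝓨))) ?_ ?_
      · intro a b h; exact congrArg Prod.fst h
      · intro ω; exact Prod.ext rfl (Subsingleton.elim _ _)
    rw [h1, h2]
    ring
  | succ k ih =>
    intro hk1
    have hk : k ≤ n := Nat.le_of_succ_le hk1
    rw [Fin.sum_univ_castSucc]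
    have hsum : (∑ i : Fin k, condMutInfo p (fun ω i' => X i' ω)
          (Y (Fin.castLE hk1 i.castSucc))
          (fun ω (j : Fin (i.castSucc).1) =>
            Y ⟨j.1, (j.isLt.trans (i.castSucc).isLt).trans_le hk1⟩ ω))
        = ∑ i : Fin k, condMutInfo p (fun ω i' => X i' ω) (Y (Fin.castLE hk i))
          (fun ω (j : Fin i.1) => Y ⟨j.1, (j.isLt.trans i.isLt).trans_le hk⟩ ω) :=
      Finset.sum_congr rfl fun i _ => rfl
    rw [hsum, ← ih hk]
    -- now show mutInfo (k+1 prefix) = mutInfo (k prefix) + last CMI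
    show _ = _
    set Xn : Ω → Fin n → 𝓧 := fun ω i => X i ω with hXn
    set Yk : Ω → Fin k → 𝓨 := fun ω j => Y (Fin.castLE hk j) ω with hYk
    set Yk1 : Ω → Fin (k+1) → 𝓨 := fun ω j => Y (Fin.castLE hk1 j) ω with hYk1
    set Ylast : Ω → 𝓨 := Y (Fin.castLE hk1 (Fin.last k)) with hYlast
    have H1 : entH p Yk1 = entH p (fun ω => (Ylast ω, Yk ω)) := by
      refine entH_congr_inj p (fun ω => (Ylast ω, Yk ω)) Yk1
        (fun z : 𝓨 × (Fin k → 𝓨) => (Fin.snoc z.2 z.1 : Fin (k+1) → 𝓨)) (snoc_inj k) ?_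
      intro ω
      funext j
      refine Fin.lastCases ?_ ?_ j
      · simp [Fin.snoc_last, hYk1, hYlast]
      · intro i
        simp only [Fin.snoc_castSucc]
        rfl
    have H2 : entH p (fun ω => (Xn ω, Yk1 ω))
        = entH p (fun ω => ((Xn ω, Ylast ω), Yk ω)) := by
      refine entH_congr_inj p (fun ω => ((Xn ω, Ylast ω), Yk ω)) _
        (fun z : ((Fin n → 𝓧) × 𝓨) × (Fin k → 𝓨) =>
          (z.1.1, (Fin.snoc z.2 z.1.2 : Fin (k+1) → 𝓨))) ?_ ?_
      · intro z w h
        simp only [Prod.mk.injEq] at h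
        have h2 := snoc_inj k (a₁ := (z.1.2, z.2)) (a₂ := (w.1.2, w.2)) h.2
        simp only [Prod.mk.injEq] at h2
        exact Prod.ext (Prod.ext h.1 h2.1) h2.2
      · intro ω
        refine Prod.ext rfl ?_
        funext j
        refine Fin.lastCases ?_ ?_ j
        · simp [Fin.snoc_last, hYk1, hYlast]
        · intro i
          simp only [Fin.snoc_castSucc]
          rfl
    have heq : mutInfo p Xn Yk1 = mutInfo p Xn Yk + condMutInfo p Xn Ylast Yk := by
      unfold mutInfo condMutInfo condEnt
      rw [H1, H2]
      ring
    exact heq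
end Chain

/-- Directed information is bounded by mutual information:
`I(Xⁿ → Yⁿ) = Σᵢ I(Xⁱ; Yᵢ | Yⁱ⁻¹) ≤ I(Xⁿ; Yⁿ)`. -/
theorem stmt7 {Ω 𝓧 𝓨 : Type*} [Fintype Ω] [Fintype 𝓧] [Fintype 𝓨]
    [DecidableEq 𝓧] [DecidableEq 𝓨]
    (p : Ω → ℝ) (hp : ∀ ω, 0 ≤ p ω) (hp1 : ∑ ω, p ω = 1)
    (n : ℕ) (X : Fin n → Ω → 𝓧) (Y : Fin n → Ω → 𝓨) :
    ∑ i : Fin n,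
        condMutInfo p
          (fun ω => fun j : Fin (i.1 + 1) => X (Fin.castLE i.isLt j) ω)
          (Y i)
          (fun ω => fun j : Fin i.1 => Y ⟨j.1, j.isLt.trans i.isLt⟩ ω) ≤
      mutInfo p (fun ω => fun i => X i ω) (fun ω => fun i => Y i ω) := by
  classical
  have hchain := chain_rule p hp hp1 n X Y n le_rfl
  have hYn : (fun ω (j : Fin n) => Y (Fin.castLE le_rfl j) ω) = fun ω i => Y i ω := rfl
  rw [hYn] at hchain
  rw [hchain]
  refine Finset.sum_le_sum fun i _ => ?_
  -- termwise: CMI(X^i; Y_i | Y^{i-1}) ≤ CMI(X^n; Y_i | Y^{i-1})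
  set Xn : Ω → Fin n → 𝓧 := fun ω i' => X i' ω with hXn
  set Xi : Ω → Fin (i.1+1) → 𝓧 := fun ω j => X (Fin.castLE i.isLt j) ω with hXi
  set Yi : Ω → 𝓨 := Y i with hYi
  set V : Ω → Fin i.1 → 𝓨 := fun ω j => Y ⟨j.1, j.isLt.trans i.isLt⟩ ω with hV
  have hstmt : condMutInfo p Xi Yi V ≤ condMutInfo p Xn Yi V := by
    have hnn := condMutInfo_nonneg p hp Xn Yi (fun ω => (Xi ω, V ω))
    -- identities
    set T : (Fin n → 𝓧) → (Fin (i.1+1) → 𝓧) := fun x j => x (Fin.castLE i.isLt j) with hT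
    have Ha : entH p (fun ω => (Xn ω, (Xi ω, V ω))) = entH p (fun ω => (Xn ω, V ω)) := by
      refine entH_congr_inj p (fun ω => (Xn ω, V ω)) (fun ω => (Xn ω, (Xi ω, V ω)))
        (fun z : (Fin n → 𝓧) × (Fin i.1 → 𝓨) => (z.1, (T z.1, z.2))) ?_ (fun ω => rfl)
      intro z w h
      simp only [Prod.mk.injEq] at h
      exact Prod.ext h.1 h.2.2
    have Hb : entH p (fun ω => (Yi ω, (Xi ω, V ω)))
        = entH p (fun ω => ((Xi ω, Yi ω), V ω)) := by
      refine entH_congr_inj p (fun ω => ((Xi ω, Yi ω), V ω)) _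
        (fun z : ((Fin (i.1+1) → 𝓧) × 𝓨) × (Fin i.1 → 𝓨) =>
          (z.1.2, (z.1.1, z.2))) ?_ ?_
      · intro z w h
        simp only [Prod.mk.injEq] at h
        exact Prod.ext (Prod.ext h.2.1 h.1) h.2.2
      · intro ω; rfl
    have Hd : entH p (fun ω => ((Xn ω, Yi ω), (Xi ω, V ω)))
        = entH p (fun ω => ((Xn ω, Yi ω), V ω)) := by
      refine entH_congr_inj p (fun ω => ((Xn ω, Yi ω), V ω))
        (fun ω => ((Xn ω, Yi ω), (Xi ω, V ω)))
        (fun z : ((Fin n → 𝓧) × 𝓨) × (Fin i.1 → 𝓨) =>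
          (z.1, (T z.1.1, z.2))) ?_ (fun ω => rfl)
      intro z w h
      simp only [Prod.mk.injEq] at h
      exact Prod.ext h.1 h.2.2
    unfold condMutInfo condEnt at hnn ⊢
    rw [Ha, Hb, Hd] at hnn
    linarith
  exact hstmt
end

section
/- The noisy-feedback achievable rate is at most the ideal-feedback objective with the noisy power constraint: for any strictly lower triangular B, positive semidefinite K_s, and positive definite K_w, K_v, log[det((I+B)K_w(I+B)ᵀ + B K_v Bᵀ + K_s)/det((I+B)K_w(I+B)ᵀ + B K_v Bᵀ)] ≤ log[det((I+B)K_w(I+B)ᵀ + K_s)/det K_w]. -/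
open Matrix

section Aux

variable {m : Type*} [Fintype m] [DecidableEq m]

open scoped MatrixOrder in
/-- Square root of a positive semidefinite matrix (via the continuous functional calculus). -/
noncomputable def Matrix.PosSemidef.sqrt {A : Matrix m m ℝ} (_hA : A.PosSemidef) :
    Matrix m m ℝ :=
  CFC.sqrt A

open scoped MatrixOrder in
lemma Matrix.PosSemidef.posSemidef_sqrt {A : Matrix m m ℝ} (hA : A.PosSemidef) :
    hA.sqrt.PosSemidef :=
  (CFC.sqrt_nonneg A).posSemidef

open scoped MatrixOrder in
lemma Matrix.PosSemidef.sqrt_mul_self {A : Matrix m m ℝ} (hA : A.PosSemidef) :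
    hA.sqrt * hA.sqrt = A :=
  CFC.sqrt_mul_sqrt_self A hA.nonneg

/-- `det (1 + D) ≥ 1` for `D` positive semidefinite. -/
lemma aux_det_one_add_psd {D : Matrix m m ℝ} (hD : D.PosSemidef) :
    1 ≤ (1 + D).det := by
  have hH := hD.isHermitian
  set U : Matrix m m ℝ := (hH.eigenvectorUnitary : Matrix m m ℝ) with hU
  have hUU : U * star U = 1 := mem_unitaryGroup_iff.mp hH.eigenvectorUnitary.2
  have hspec : D = U * diagonal (RCLike.ofReal ∘ hH.eigenvalues) * star U :=
    hH.spectral_theorem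
  set L : Matrix m m ℝ := diagonal (RCLike.ofReal ∘ hH.eigenvalues) with hL
  have h1 : (1 : Matrix m m ℝ) + D = U * (1 + L) * star U := by
    conv_rhs => rw [mul_add, add_mul, mul_one, hUU, ← hspec]
  have h2 : U.det * (star U).det = 1 := by rw [← det_mul, hUU, det_one]
  have hdet : (1 + D).det = ((1 : Matrix m m ℝ) + L).det := by
    rw [h1, det_mul, det_mul]
    linear_combination ((1 : Matrix m m ℝ) + L).det * h2
  set f : m → ℝ := (fun _ => 1) + RCLike.ofReal ∘ hH.eigenvalues with hf
  have hdiag : (1 : Matrix m m ℝ) + L = diagonal f := by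
    rw [hL, hf]
    conv_lhs => rw [← diagonal_one]
    rw [diagonal_add]
    rfl
  rw [hdet, hdiag, det_diagonal]
  calc (1 : ℝ) = ∏ _i : m, 1 := by simp
  _ ≤ ∏ i : m, f i := by
      refine Finset.prod_le_prod (fun i _ => zero_le_one) fun i _ => ?_
      have := hD.eigenvalues_nonneg i
      simp only [hf, Pi.add_apply, RCLike.ofReal_real_eq_id, Function.comp_apply, id_eq]
      linarith

/-- `det A ≤ det (A + D)` for `A` positive definite and `D` positive semidefinite. -/
lemma aux_det_add_eq {P S : Matrix m m ℝ} (hP : P.PosDef) (hS : S.PosSemidef) :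
    (P + S).det = P.det * (1 + hS.sqrt * P⁻¹ * hS.sqrt).det := by
  have hPP : P * P⁻¹ = 1 := mul_nonsing_inv _ (isUnit_iff_ne_zero.mpr hP.det_pos.ne')
  have h1 : P + S = P * (1 + P⁻¹ * (hS.sqrt * hS.sqrt)) := by
    rw [mul_add, mul_one, ← mul_assoc, hPP, one_mul, hS.sqrt_mul_self]
  rw [h1, det_mul, show P⁻¹ * (hS.sqrt * hS.sqrt) = (P⁻¹ * hS.sqrt) * hS.sqrt from
    (mul_assoc _ _ _).symm, det_one_add_mul_comm, ← mul_assoc]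

lemma aux_det_le_det_add {A D : Matrix m m ℝ} (hA : A.PosDef) (hD : D.PosSemidef) :
    A.det ≤ (A + D).det := by
  rw [aux_det_add_eq hA hD]
  have hpsd : (hD.sqrt * A⁻¹ * hD.sqrt).PosSemidef := by
    have := hA.inv.posSemidef.conjTranspose_mul_mul_same hD.sqrt
    rwa [hD.posSemidef_sqrt.isHermitian.eq] at this
  exact le_mul_of_one_le_right hA.det_pos.le (aux_det_one_add_psd hpsd)

/-- Inverse is antitone: `A⁻¹ - (A + C)⁻¹` is positive semidefinite. -/
lemma aux_inv_sub_inv_psd {A C : Matrix m m ℝ} (hA : A.PosDef) (hC : C.PosSemidef) :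
    (A⁻¹ - (A + C)⁻¹).PosSemidef := by
  have hRH : hC.sqrtᴴ = hC.sqrt := hC.posSemidef_sqrt.isHermitian.eq
  have hGpd : (1 + hC.sqrt * A⁻¹ * hC.sqrt).PosDef := by
    refine Matrix.PosDef.one.add_posSemidef ?_
    have := hA.inv.posSemidef.conjTranspose_mul_mul_same hC.sqrt
    rwa [hRH] at this
  have hwood := Matrix.add_mul_mul_inv_eq_sub A hC.sqrt 1 hC.sqrt hA.isUnit isUnit_one
      (by rw [inv_one]; exact hGpd.isUnit)
  have hCeq : hC.sqrt * (1 : Matrix m m ℝ) * hC.sqrt = C := by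
    rw [mul_one, hC.sqrt_mul_self]
  rw [hCeq, inv_one] at hwood
  have key : A⁻¹ - (A + C)⁻¹
      = (hC.sqrt * A⁻¹)ᴴ * (1 + hC.sqrt * A⁻¹ * hC.sqrt)⁻¹ * (hC.sqrt * A⁻¹) := by
    rw [hwood, sub_sub_cancel, conjTranspose_mul, hRH, hA.inv.isHermitian.eq]
    simp only [mul_assoc]
  rw [key]
  exact hGpd.inv.posSemidef.conjTranspose_mul_mul_same _

/-- The key determinant-ratio monotonicity. -/
lemma aux_ratio_le {A C S : Matrix m m ℝ} (hA : A.PosDef) (hC : C.PosSemidef)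
    (hS : S.PosSemidef) :
    (A + C + S).det / (A + C).det ≤ (A + S).det / A.det := by
  have hQ : (A + C).PosDef := hA.add_posSemidef hC
  have hTH : hS.sqrtᴴ = hS.sqrt := hS.posSemidef_sqrt.isHermitian.eq
  have e1 : (A + C + S).det = (A + C).det * (1 + hS.sqrt * (A + C)⁻¹ * hS.sqrt).det :=
    aux_det_add_eq hQ hS
  have e2 : (A + S).det = A.det * (1 + hS.sqrt * A⁻¹ * hS.sqrt).det :=
    aux_det_add_eq hA hS
  have hX : (1 + hS.sqrt * (A + C)⁻¹ * hS.sqrt).PosDef := by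
    refine Matrix.PosDef.one.add_posSemidef ?_
    have := hQ.inv.posSemidef.conjTranspose_mul_mul_same hS.sqrt
    rwa [hTH] at this
  have hY : (hS.sqrt * (A⁻¹ - (A + C)⁻¹) * hS.sqrt).PosSemidef := by
    have := (aux_inv_sub_inv_psd hA hC).conjTranspose_mul_mul_same hS.sqrt
    rwa [hTH] at this
  have key : (1 + hS.sqrt * (A + C)⁻¹ * hS.sqrt).det ≤ (1 + hS.sqrt * A⁻¹ * hS.sqrt).det := by
    have h := aux_det_le_det_add hX hY
    have heq : 1 + hS.sqrt * (A + C)⁻¹ * hS.sqrt + hS.sqrt * (A⁻¹ - (A + C)⁻¹) * hS.sqrt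
        = 1 + hS.sqrt * A⁻¹ * hS.sqrt := by
      noncomm_ring
    rwa [heq] at h
  rw [e1, e2, mul_div_cancel_left₀ _ hQ.det_pos.ne', mul_div_cancel_left₀ _ hA.det_pos.ne']
  exact key

/-- Conjugation of a positive definite matrix by an invertible matrix. -/
lemma aux_posDef_conj {K M : Matrix m m ℝ} (hK : K.PosDef) (hM : IsUnit M.det) :
    (M * K * Mᴴ).PosDef := by
  refine Matrix.PosDef.of_dotProduct_mulVec_pos
    (isHermitian_mul_mul_conjTranspose M hK.isHermitian) fun x hx => ?_
  have hMx : Mᴴ *ᵥ x ≠ 0 := by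
    intro h
    have hMH : IsUnit Mᴴ.det := by
      rwa [det_conjTranspose, isUnit_iff_ne_zero, star_ne_zero, ← isUnit_iff_ne_zero]
    have : (Mᴴ)⁻¹ *ᵥ (Mᴴ *ᵥ x) = x := by
      rw [mulVec_mulVec, nonsing_inv_mul _ hMH, one_mulVec]
    rw [h, mulVec_zero] at this
    exact hx this.symm
  have := hK.dotProduct_mulVec_pos hMx
  simpa only [star_mulVec, dotProduct_mulVec, vecMul_vecMul, conjTranspose_conjTranspose,
    mul_assoc] using this

end Aux

/-- The noisy-feedback rate formula is at most the ideal-feedback objective: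
`log[det((I+B)K_w(I+B)ᵀ + B K_v Bᵀ + K_s)/det((I+B)K_w(I+B)ᵀ + B K_v Bᵀ)]
 ≤ log[det((I+B)K_w(I+B)ᵀ + K_s)/det K_w]`. -/
theorem stmt17 (n : ℕ) (Kw Kv Ks B : Matrix (Fin n) (Fin n) ℝ)
    (hKw_symm : Kw.IsSymm) (hKv_symm : Kv.IsSymm) (hKs_symm : Ks.IsSymm)
    (hKw : Kw.PosDef) (hKv : Kv.PosDef) (hKs : Ks.PosSemidef)
    (hB : ∀ i j : Fin n, i ≤ j → B i j = 0) :
    Real.log (((1 + B) * Kw * (1 + B)ᵀ + B * Kv * Bᵀ + Ks).det /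
        ((1 + B) * Kw * (1 + B)ᵀ + B * Kv * Bᵀ).det) ≤
      Real.log (((1 + B) * Kw * (1 + B)ᵀ + Ks).det / Kw.det) := by
  have hMdet : (1 + B).det = 1 := by
    have htri : (1 + B).BlockTriangular OrderDual.toDual := by
      intro i j hij
      have hij' : i < j := hij
      simp [Matrix.add_apply, Matrix.one_apply_ne (ne_of_lt hij'), hB i j hij'.le]
    rw [det_of_lowerTriangular _ htri]
    refine Finset.prod_eq_one fun i _ => ?_
    simp [Matrix.add_apply, Matrix.one_apply_eq, hB i i le_rfl]
  have hMunit : IsUnit (1 + B).det := by rw [hMdet]; exact isUnit_one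
  have hTR : (1 + B)ᴴ = (1 + B)ᵀ := conjTranspose_eq_transpose_of_trivial _
  have hBTR : Bᴴ = Bᵀ := conjTranspose_eq_transpose_of_trivial _
  have hA : ((1 + B) * Kw * (1 + B)ᵀ).PosDef := by
    have := aux_posDef_conj hKw hMunit
    rwa [hTR] at this
  have hC : (B * Kv * Bᵀ).PosSemidef := by
    have := hKv.posSemidef.mul_mul_conjTranspose_same B
    rwa [hBTR] at this
  have hAdet : ((1 + B) * Kw * (1 + B)ᵀ).det = Kw.det := by
    rw [det_mul, det_mul, det_transpose, hMdet, one_mul, mul_one]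
  have hineq := aux_ratio_le hA hC hKs
  rw [hAdet] at hineq
  refine Real.log_le_log ?_ hineq
  exact div_pos ((hA.add_posSemidef hC).add_posSemidef hKs).det_pos
    (hA.add_posSemidef hC).det_pos
end

section
/- For positive definite A, positive semidefinite C and positive semidefinite S (all symmetric n×n), det(A + C + S) · det A ≤ det(A + S) · det(A + C). -/
open Matrix Finset
open scoped MatrixOrder

lemma one_le_det_one_add {n : ℕ} {X : Matrix (Fin n) (Fin n) ℝ}
    (hX : X.PosSemidef) : 1 ≤ (1 + X).det := by
  have h := hX.1.spectral_theorem
  set U : Matrix (Fin n) (Fin n) ℝ := (hX.1.eigenvectorUnitary : Matrix (Fin n) (Fin n) ℝ)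
  have hU : U * star U = 1 := (Matrix.mem_unitaryGroup_iff).mp hX.1.eigenvectorUnitary.2
  have hU' : star U * U = 1 := (Matrix.mem_unitaryGroup_iff').mp hX.1.eigenvectorUnitary.2
  have h1 : (1 + X) = U * (1 + diagonal (RCLike.ofReal ∘ hX.1.eigenvalues)) * star U := by
    rw [Matrix.mul_add, Matrix.add_mul, Matrix.mul_one, hU]
    exact congrArg (1 + ·) h
  rw [h1, det_mul, det_mul, mul_comm, ← mul_assoc, ← det_mul, hU', det_one, one_mul]
  have : (1 : Matrix (Fin n) (Fin n) ℝ) + diagonal (RCLike.ofReal ∘ hX.1.eigenvalues)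
      = diagonal (fun i => 1 + hX.1.eigenvalues i) := by
    rw [← diagonal_one, diagonal_add]
    rfl
  rw [this, det_diagonal]
  have hp : ∏ _i : Fin n, (1:ℝ) ≤ ∏ i, (1 + hX.1.eigenvalues i) :=
    Finset.prod_le_prod (fun i _ => zero_le_one)
      (fun i _ => by linarith [hX.eigenvalues_nonneg i])
  simpa using hp

lemma det_le_det_add {n : ℕ} {P X : Matrix (Fin n) (Fin n) ℝ}
    (hP : P.PosDef) (hX : X.PosSemidef) : P.det ≤ (P + X).det := by
  set R := CFC.sqrt P with hR
  have hRR : R * R = P := CFC.sqrt_mul_sqrt_self P hP.posSemidef.nonneg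
  have hRh : R.IsHermitian := (Matrix.nonneg_iff_posSemidef.mp (CFC.sqrt_nonneg P)).isHermitian
  have hdetR : R.det * R.det = P.det := by rw [← det_mul, hRR]
  have hRd : IsUnit R.det := by
    refine isUnit_iff_ne_zero.2 fun h0 => ?_
    rw [h0, mul_zero] at hdetR
    exact absurd hdetR.symm (ne_of_gt hP.det_pos)
  have hRi : R * R⁻¹ = 1 := mul_nonsing_inv R hRd
  have hiR : R⁻¹ * R = 1 := nonsing_inv_mul R hRd
  have hY : ((R⁻¹)ᴴ * X * R⁻¹).PosSemidef := hX.conjTranspose_mul_mul_same R⁻¹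
  rw [hRh.inv.eq] at hY
  have key : P + X = R * (1 + R⁻¹ * X * R⁻¹) * R := by
    rw [Matrix.mul_add, Matrix.add_mul, Matrix.mul_one, hRR]
    congr 1
    rw [← Matrix.mul_assoc, ← Matrix.mul_assoc, hRi, Matrix.one_mul, Matrix.mul_assoc, hiR,
      Matrix.mul_one]
  rw [key, det_mul, det_mul]
  have heq : R.det * (1 + R⁻¹ * X * R⁻¹).det * R.det
      = (1 + R⁻¹ * X * R⁻¹).det * P.det := by
    rw [← hdetR]; ring
  rw [heq]
  nlinarith [one_le_det_one_add hY, hP.det_pos]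

/-- Determinant submodularity-type inequality: for `A ≻ 0`, `C ⪰ 0`, `S ⪰ 0`,
`det(A + C + S) · det A ≤ det(A + S) · det(A + C)`. -/
theorem stmt18 (n : ℕ) (A C S : Matrix (Fin n) (Fin n) ℝ)
    (hA_symm : A.IsSymm) (hC_symm : C.IsSymm) (hS_symm : S.IsSymm)
    (hA : A.PosDef) (hC : C.PosSemidef) (hS : S.PosSemidef) :
    (A + C + S).det * A.det ≤ (A + S).det * (A + C).det := by
  set T := A + S with hTdef
  have hT : T.PosDef := hA.add_posSemidef hS
  set W := CFC.sqrt C with hW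
  have hWW : W * W = C := CFC.sqrt_mul_sqrt_self C hC.nonneg
  have hWh : W.IsHermitian := (Matrix.nonneg_iff_posSemidef.mp (CFC.sqrt_nonneg C)).isHermitian
  have hAu : IsUnit A.det := isUnit_iff_ne_zero.2 (ne_of_gt hA.det_pos)
  have hTu : IsUnit T.det := isUnit_iff_ne_zero.2 (ne_of_gt hT.det_pos)
  have hAi : A * A⁻¹ = 1 := mul_nonsing_inv A hAu
  have hiA : A⁻¹ * A = 1 := nonsing_inv_mul A hAu
  have hTi : T * T⁻¹ = 1 := mul_nonsing_inv T hTu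
  have hiT : T⁻¹ * T = 1 := nonsing_inv_mul T hTu
  have fact : ∀ (M : Matrix (Fin n) (Fin n) ℝ), M * M⁻¹ = 1 →
      (M + C).det = M.det * (1 + W * M⁻¹ * W).det := by
    intro M hM
    have hfac : M + C = M * (1 + M⁻¹ * W * W) := by
      rw [Matrix.mul_add, Matrix.mul_one, ← Matrix.mul_assoc, ← Matrix.mul_assoc, hM,
        Matrix.one_mul, hWW]
    rw [hfac, det_mul]
    congr 1
    rw [det_one_add_mul_comm (M⁻¹ * W) W, ← Matrix.mul_assoc]
  have hACS : (A + C + S).det = T.det * (1 + W * T⁻¹ * W).det := by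
    have h : A + C + S = T + C := by rw [hTdef]; abel
    rw [h, fact T hTi]
  have hAC : (A + C).det = A.det * (1 + W * A⁻¹ * W).det := fact A hAi
  set E := T⁻¹ * S * T⁻¹ + T⁻¹ * S * A⁻¹ * S * T⁻¹ with hEdef
  have hEeq : A⁻¹ = T⁻¹ + E := by
    have h1 : T⁻¹ * S * T⁻¹ + T⁻¹ * S * A⁻¹ * S * T⁻¹ = T⁻¹ * S * A⁻¹ := by
      have e1 : T⁻¹ * S * T⁻¹ = T⁻¹ * S * A⁻¹ * A * T⁻¹ := by
        rw [Matrix.mul_assoc (T⁻¹ * S) A⁻¹ A, hiA, Matrix.mul_one]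
      rw [e1]
      have e2 : T⁻¹ * S * A⁻¹ * A * T⁻¹ + T⁻¹ * S * A⁻¹ * S * T⁻¹
          = T⁻¹ * S * A⁻¹ * (A + S) * T⁻¹ := by
        rw [Matrix.mul_add, Matrix.add_mul]
      rw [e2, ← hTdef, Matrix.mul_assoc, hTi, Matrix.mul_one]
    have h2 : T⁻¹ * S * A⁻¹ = A⁻¹ - T⁻¹ := by
      have e3 : T⁻¹ * S * A⁻¹ = T⁻¹ * (T - A) * A⁻¹ := by
        rw [hTdef]; congr 2; abel
      rw [e3, Matrix.mul_sub, Matrix.sub_mul, hiT, Matrix.one_mul,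
        Matrix.mul_assoc, hAi, Matrix.mul_one]
    rw [hEdef, h1, h2]; abel
  have hTih : (T⁻¹).IsHermitian := hT.isHermitian.inv
  have hAih : (A⁻¹).IsHermitian := hA.isHermitian.inv
  have hE : E.PosSemidef := by
    have e1 : (T⁻¹ * S * T⁻¹).PosSemidef := by
      have := hS.conjTranspose_mul_mul_same T⁻¹
      rwa [hTih.eq] at this
    have e2 : (T⁻¹ * S * A⁻¹ * S * T⁻¹).PosSemidef := by
      have := (hA.inv.posSemidef).conjTranspose_mul_mul_same (S * T⁻¹)
      rw [conjTranspose_mul, hTih.eq, hS.isHermitian.eq] at this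
      have heq : (T⁻¹ * S) * A⁻¹ * (S * T⁻¹) = T⁻¹ * S * A⁻¹ * S * T⁻¹ := by
        simp [Matrix.mul_assoc]
      rwa [heq] at this
    exact e1.add e2
  have hWTW : (W * T⁻¹ * W).PosSemidef := by
    have := (hT.inv.posSemidef).conjTranspose_mul_mul_same W
    rwa [hWh.eq] at this
  have hWEW : (W * E * W).PosSemidef := by
    have := hE.conjTranspose_mul_mul_same W
    rwa [hWh.eq] at this
  have h1T : (1 + W * T⁻¹ * W).PosDef := Matrix.PosDef.one.add_posSemidef hWTW
  have hsplit : 1 + W * A⁻¹ * W = (1 + W * T⁻¹ * W) + W * E * W := by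
    rw [hEeq, Matrix.mul_add, Matrix.add_mul]; abel
  have key : (1 + W * T⁻¹ * W).det ≤ (1 + W * A⁻¹ * W).det := by
    rw [hsplit]
    exact det_le_det_add h1T hWEW
  rw [hACS, hAC]
  calc T.det * (1 + W * T⁻¹ * W).det * A.det
      ≤ T.det * (1 + W * A⁻¹ * W).det * A.det := by
        exact mul_le_mul_of_nonneg_right
          (mul_le_mul_of_nonneg_left key hT.det_pos.le) hA.det_pos.le
    _ = T.det * (A.det * (1 + W * A⁻¹ * W).det) := by ring
end
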